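/- Let L be a finite multiset of real numbers with |L| = N ≥ 2 and let ε ∈ (0,1). Then there exists a finite multiset S of real numbers with |S| = N such that S is an ε-sketch of L and S has at most ⌈4/ε⌉ + ⌈4·ln(N)/ε⌉ + 4 distinct elements. -/

import Mathlib

/-- The number of elements of the multiset `L` smaller than `lam`, with multiplicity. -/
noncomputable def cntLT (L : Multiset ℝ) (lam : ℝ) : ℕ := (L.filter (fun x => x < lam)).card

/-- `S` is an `eps`-sketch of `L`: for every threshold `lam`,
`(1 - eps)·cnt_{<lam}(L) ≤ cnt_{<lam}(S) ≤ cnt_{<lam}(L)`. -/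
def IsSketch (eps : ℝ) (S L : Multiset ℝ) : Prop :=
  ∀ lam : ℝ,
    (1 - eps) * (cntLT L lam : ℝ) ≤ (cntLT S lam : ℝ) ∧
    (cntLT S lam : ℝ) ≤ (cntLT L lam : ℝ)

/-- Geometric rank sequence used to build the sketch. -/
noncomputable def rseq (N : ℕ) (eps : ℝ) : ℕ → ℕ
  | 0 => 1
  | j+1 => min N (max (rseq N eps j + 1) ⌊(rseq N eps j : ℝ) / (1 - eps)⌋₊)

lemma rseq_le {N : ℕ} {eps : ℝ} (hN : 1 ≤ N) : ∀ j, rseq N eps j ≤ N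
  | 0 => hN
  | _+1 => min_le_left _ _

lemma rseq_pos {N : ℕ} {eps : ℝ} (hN : 1 ≤ N) : ∀ j, 1 ≤ rseq N eps j
  | 0 => le_refl 1
  | _+1 => le_min hN (le_trans (Nat.le_add_left 1 _) (le_max_left _ _))

lemma rseq_mono {N : ℕ} {eps : ℝ} (hN : 1 ≤ N) : Monotone (rseq N eps) := by
  apply monotone_nat_of_le_succ
  intro j
  exact le_min (rseq_le hN j) (le_trans (Nat.le_succ _) (le_max_left _ _))

lemma rseq_ge {N : ℕ} {eps : ℝ} (hN : 1 ≤ N) : ∀ j, min N (j+1) ≤ rseq N eps j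
  | 0 => min_le_right _ _
  | j+1 => by
    have ih := rseq_ge (eps := eps) hN j
    show min N (j+2) ≤ min N (max (rseq N eps j + 1) ⌊(rseq N eps j : ℝ) / (1 - eps)⌋₊)
    generalize ⌊(rseq N eps j : ℝ) / (1 - eps)⌋₊ = f
    omega

lemma rseq_step {N : ℕ} {eps : ℝ} (heps0 : 0 < eps) (heps1 : eps < 1) (j : ℕ) :
    (1 - eps) * ((rseq N eps (j+1) : ℝ) - 1) ≤ rseq N eps j := by
  have h : rseq N eps (j+1) ≤ max (rseq N eps j + 1) ⌊(rseq N eps j : ℝ) / (1 - eps)⌋₊ :=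
    min_le_right _ _
  have h1e : (0:ℝ) < 1 - eps := by linarith
  rcases max_choice (rseq N eps j + 1) ⌊(rseq N eps j : ℝ) / (1 - eps)⌋₊ with hm | hm <;>
    rw [hm] at h
  · have hc : (rseq N eps (j+1) : ℝ) ≤ (rseq N eps j : ℝ) + 1 := by exact_mod_cast h
    have hr0 : (0:ℝ) ≤ (rseq N eps j : ℝ) := Nat.cast_nonneg _
    nlinarith
  · have hc : (rseq N eps (j+1) : ℝ) ≤ (⌊(rseq N eps j : ℝ) / (1 - eps)⌋₊ : ℝ) := by
      exact_mod_cast h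
    have hfl : (⌊(rseq N eps j : ℝ) / (1 - eps)⌋₊ : ℝ) ≤ (rseq N eps j : ℝ) / (1 - eps) :=
      Nat.floor_le (by positivity)
    have : (rseq N eps (j+1) : ℝ) ≤ (rseq N eps j : ℝ) / (1 - eps) := le_trans hc hfl
    have h2 : (1 - eps) * (rseq N eps (j+1) : ℝ) ≤ (rseq N eps j : ℝ) := by
      rw [mul_comm]
      exact (le_div_iff₀ h1e).mp this
    nlinarith

lemma rseq_growth {N : ℕ} {eps : ℝ} (hN : 1 ≤ N) (heps0 : 0 < eps) (heps1 : eps < 1) :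
    ∀ t, min (N:ℝ) ((4/eps) * (1+eps/2)^t) ≤ (rseq N eps (⌈4/eps⌉₊ + t) : ℝ) := by
  have h1e : (0:ℝ) < 1 - eps := by linarith
  have h4e : (4:ℝ) ≤ 4/eps := by
    rw [le_div_iff₀ heps0]; nlinarith
  intro t
  induction t with
  | zero =>
    have h0 := rseq_ge (eps := eps) hN (⌈4/eps⌉₊)
    have hc : min (N:ℝ) ((⌈4/eps⌉₊:ℝ) + 1) ≤ (rseq N eps (⌈4/eps⌉₊ + 0) : ℝ) := by
      have : ((min N (⌈4/eps⌉₊ + 1) : ℕ) : ℝ) ≤ (rseq N eps (⌈4/eps⌉₊ + 0) : ℝ) := by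
        exact_mod_cast h0
      rwa [Nat.cast_min, Nat.cast_add, Nat.cast_one] at this
    refine le_trans ?_ hc
    apply min_le_min (le_refl _)
    have := Nat.le_ceil (4/eps)
    rw [pow_zero, mul_one]
    linarith
  | succ t ih =>
    set j := ⌈4/eps⌉₊ + t with hj
    set r := rseq N eps j with hr
    set x := (4/eps) * (1+eps/2)^t with hx
    have hxpos : 0 < x := by positivity
    have hrle : r ≤ N := rseq_le hN j
    have hstep : rseq N eps (j+1) = min N (max (r + 1) ⌊(r : ℝ) / (1 - eps)⌋₊) := rfl
    have hgoal : ⌈4/eps⌉₊ + (t+1) = j + 1 := by omega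
    rw [hgoal, pow_succ, ← mul_assoc, hstep]
    rcases le_or_gt (N:ℝ) x with hNx | hxN
    · have hrN : (N:ℝ) ≤ (r:ℝ) := by rwa [min_eq_left hNx] at ih
      have hrN' : r = N := le_antisymm hrle (by exact_mod_cast hrN)
      have : min N (max (r + 1) ⌊(r : ℝ) / (1 - eps)⌋₊) = N := by
        rw [min_eq_left]; exact le_trans (by omega) (le_max_left _ _)
      rw [this]
      exact min_le_left _ _
    · have hxr : x ≤ (r:ℝ) := by rwa [min_eq_right hxN.le] at ih
      have hx4 : 4/eps ≤ x := by
        rw [hx]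
        nlinarith [one_le_pow₀ (show (1:ℝ) ≤ 1 + eps/2 by linarith) (n := t)]
      have hre : 4 ≤ eps * (r:ℝ) := by
        have : 4/eps ≤ (r:ℝ) := le_trans hx4 hxr
        rw [div_le_iff₀ heps0] at this
        nlinarith
      have hfl : (r:ℝ) / (1-eps) - 1 < (⌊(r : ℝ) / (1 - eps)⌋₊ : ℝ) := Nat.sub_one_lt_floor _
      have hge : x * (1+eps/2) ≤ (r:ℝ) / (1-eps) - 1 := by
        have h1 : (r:ℝ) * (1+eps) ≤ (r:ℝ) / (1-eps) := by
          rw [le_div_iff₀ h1e]; nlinarith [Nat.cast_nonneg (α := ℝ) r]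
        have h2 : x * (1+eps/2) ≤ (r:ℝ) * (1+eps/2) := by nlinarith
        nlinarith
      have hfl' : x * (1+eps/2) ≤ (⌊(r : ℝ) / (1 - eps)⌋₊ : ℝ) := le_trans hge hfl.le
      calc min (N:ℝ) (x * (1+eps/2))
          ≤ min (N:ℝ) ((⌊(r : ℝ) / (1 - eps)⌋₊ : ℝ)) := min_le_min (le_refl _) hfl'
        _ ≤ ((min N (max (r + 1) ⌊(r : ℝ) / (1 - eps)⌋₊) : ℕ) : ℝ) := by
            push_cast
            exact min_le_min (le_refl _) (le_max_right _ _)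

lemma rseq_top {N : ℕ} {eps : ℝ} (hN : 2 ≤ N) (heps0 : 0 < eps) (heps1 : eps < 1) :
    rseq N eps (⌈4/eps⌉₊ + ⌈4 * Real.log N / eps⌉₊) = N := by
  have hN1 : 1 ≤ N := by omega
  set B := ⌈4 * Real.log N / eps⌉₊ with hB
  have hNpos : (0:ℝ) < N := by exact_mod_cast Nat.lt_of_lt_of_le Nat.zero_lt_two hN
  have hgr := rseq_growth hN1 heps0 heps1 B
  have hexp1 : Real.exp (eps/4) ≤ 1 + eps/2 := by
    have ha := Real.add_one_le_exp (-(eps/4))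
    rw [Real.exp_neg] at ha
    have hE := Real.exp_pos (eps/4)
    have hb : (0:ℝ) < 1 - eps/4 := by linarith
    have ha' : (-(eps/4) + 1) * Real.exp (eps/4) ≤ 1 := by
      have := mul_le_mul_of_nonneg_right ha hE.le
      rwa [inv_mul_cancel₀ (ne_of_gt hE)] at this
    nlinarith
  have hBlog : Real.log N ≤ (B:ℝ) * (eps/4) := by
    have h4 : 4 * Real.log N / eps ≤ (B:ℝ) := Nat.le_ceil _
    rw [div_le_iff₀ heps0] at h4
    nlinarith
  have hNle : (N:ℝ) ≤ (1+eps/2)^B := by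
    calc (N:ℝ) = Real.exp (Real.log N) := (Real.exp_log hNpos).symm
      _ ≤ Real.exp ((B:ℝ) * (eps/4)) := Real.exp_le_exp.mpr hBlog
      _ = Real.exp (eps/4) ^ B := by rw [← Real.exp_nat_mul]
      _ ≤ (1+eps/2)^B := pow_le_pow_left₀ (Real.exp_pos _).le hexp1 B
  have hxN : (N:ℝ) ≤ (4/eps) * (1+eps/2)^B := by
    have h4e : (1:ℝ) ≤ 4/eps := by rw [le_div_iff₀ heps0]; nlinarith
    nlinarith [pow_pos (show (0:ℝ) < 1 + eps/2 by linarith) B]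
  rw [min_eq_left hxN] at hgr
  have : N ≤ rseq N eps (⌈4/eps⌉₊ + B) := by exact_mod_cast hgr
  exact le_antisymm (rseq_le hN1 _) this

lemma sorted_getD_lt_iff (lam : ℝ) :
    ∀ (l : List ℝ), List.Pairwise (· ≤ ·) l → ∀ i, i < l.length →
      (l.getD i 0 < lam ↔ i < l.countP (fun x => decide (x < lam))) := by
  intro l
  induction l with
  | nil => intro _ i hi; simp at hi
  | cons a tl ih =>
    intro hs i hi
    have hs' := List.pairwise_cons.mp hs
    rw [List.countP_cons]
    match i with
    | 0 =>
      simp only [List.getD_cons_zero]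
      constructor
      · intro h; simp [h]
      · intro h
        by_contra hlt
        have hz : tl.countP (fun x => decide (x < lam)) = 0 := by
          rw [List.countP_eq_zero]
          intro x hx
          simp only [decide_eq_true_eq]
          have := hs'.1 x hx
          push_neg at hlt
          linarith
        simp [hz, hlt] at h
    | i+1 =>
      simp only [List.getD_cons_succ]
      have hi' : i < tl.length := by simpa using hi
      rw [ih hs'.2 i hi']
      by_cases ha : a < lam
      · simp [ha]
      · have hz : tl.countP (fun x => decide (x < lam)) = 0 := by
          rw [List.countP_eq_zero]
          intro x hx
          simp only [decide_eq_true_eq]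
          have := hs'.1 x hx
          push_neg at ha
          linarith
        simp [hz, ha]

lemma card_msum (s : Finset ℕ) (f : ℕ → Multiset ℝ) :
    Multiset.card (∑ j ∈ s, f j) = ∑ j ∈ s, Multiset.card (f j) := by
  classical
  induction s using Finset.induction with
  | empty => simp
  | insert a s h ih => simp [Finset.sum_insert h, ih]

lemma countP_sum (p : ℝ → Prop) [DecidablePred p] (s : Finset ℕ) (f : ℕ → Multiset ℝ) :
    Multiset.countP p (∑ j ∈ s, f j) = ∑ j ∈ s, Multiset.countP p (f j) := by
  classical
  induction s using Finset.induction with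
  | empty => simp
  | insert a s h ih => simp [Finset.sum_insert h, ih]

lemma countP_replicate (p : ℝ → Prop) [DecidablePred p] (n : ℕ) (a : ℝ) :
    Multiset.countP p (Multiset.replicate n a) = if p a then n else 0 := by
  induction n with
  | zero => simp
  | succ n ih => rw [Multiset.replicate_succ, Multiset.countP_cons, ih]; split <;> simp

theorem stmt13 (L : Multiset ℝ) (N : ℕ) (hN : 2 ≤ N) (hcard : Multiset.card L = N)
    (eps : ℝ) (heps0 : 0 < eps) (heps1 : eps < 1) :
    ∃ S : Multiset ℝ, Multiset.card S = N ∧ IsSketch eps S L ∧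
      S.toFinset.card ≤ ⌈(4 : ℝ) / eps⌉₊ + ⌈4 * Real.log N / eps⌉₊ + 4 := by
  classical
  have hN1 : 1 ≤ N := by omega
  set K := ⌈(4:ℝ)/eps⌉₊ + ⌈4 * Real.log N / eps⌉₊ with hK
  set r := rseq N eps with hrdef
  have hrK : r K = N := rseq_top hN heps0 heps1
  have hmono : Monotone r := rseq_mono hN1
  have hpos : ∀ j, 1 ≤ r j := rseq_pos hN1
  have hle : ∀ j, r j ≤ N := rseq_le hN1
  have hr0 : r 0 = 1 := rfl
  set l := L.sort (· ≤ ·) with hldef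
  have hsort : List.Pairwise (· ≤ ·) l := L.pairwise_sort _
  have hcoe : (l : Multiset ℝ) = L := L.sort_eq _
  have hlen : l.length = N := by rw [hldef, Multiset.length_sort, hcard]
  set S : Multiset ℝ := Multiset.replicate 1 (l.getD 0 0) +
    ∑ j ∈ Finset.range K, Multiset.replicate (r (j+1) - r j) (l.getD (r (j+1) - 1) 0) with hSdef
  have hcnt : ∀ lam, cntLT L lam = l.countP (fun x => decide (x < lam)) := by
    intro lam
    rw [cntLT, ← Multiset.countP_eq_card_filter, ← hcoe, Multiset.coe_countP]
  have hcharac : ∀ lam m, m < N → (l.getD m 0 < lam ↔ m < cntLT L lam) := by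
    intro lam m hm
    rw [hcnt lam]
    exact sorted_getD_lt_iff lam l hsort m (by omega)
  have hcle : ∀ lam, cntLT L lam ≤ N := by
    intro lam
    rw [cntLT, ← hcard]
    exact Multiset.card_le_card (Multiset.filter_le _ _)
  have htel : ∑ j ∈ Finset.range K, (r (j+1) - r j) = r K - r 0 := Finset.sum_range_tsub hmono K
  have hcardS : Multiset.card S = N := by
    rw [hSdef, Multiset.card_add, Multiset.card_replicate, card_msum]
    simp only [Multiset.card_replicate]
    rw [htel, hrK, hr0]
    omega
  have hcntS : ∀ lam, cntLT S lam = (if 0 < cntLT L lam then 1 else 0) +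
      ∑ j ∈ Finset.range K, (if r (j+1) ≤ cntLT L lam then r (j+1) - r j else 0) := by
    intro lam
    have h0 : cntLT S lam = Multiset.countP (fun x => x < lam) S := by
      rw [cntLT, Multiset.countP_eq_card_filter]
    rw [h0, hSdef, Multiset.countP_add, countP_sum, countP_replicate]
    congr 1
    · exact if_congr (hcharac lam 0 (by omega)) rfl rfl
    · apply Finset.sum_congr rfl
      intro j _
      rw [countP_replicate]
      refine if_congr ?_ rfl rfl
      have h1 : r (j+1) - 1 < N := by have := hle (j+1); have := hpos (j+1); omega
      rw [hcharac lam _ h1]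
      have := hpos (j+1)
      omega
  refine ⟨S, hcardS, ?_, ?_⟩
  · -- sketch property
    intro lam
    set c := cntLT L lam with hc
    have hcN : c ≤ N := hcle lam
    by_cases hc0 : c = 0
    · have hc0' : cntLT L lam = 0 := by omega
      have hz : cntLT S lam = 0 := by
        rw [hcntS lam, hc0', if_neg (by omega),
          Finset.sum_eq_zero (fun j _ => if_neg (by have := hpos (j+1); omega))]
        rfl
      refine ⟨?_, ?_⟩ <;> simp [hz, hc0]
    · have hc1 : 1 ≤ c := by omega
      set J := Nat.findGreatest (fun j => r j ≤ c) K with hJ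
      have hJle : J ≤ K := Nat.findGreatest_le (P := fun j => r j ≤ c) K
      have hJspec : r J ≤ c :=
        Nat.findGreatest_spec (P := fun j => r j ≤ c) (Nat.zero_le K)
          (show r 0 ≤ c by rw [hr0]; omega)
      have hfil : (Finset.range K).filter (fun j => r (j+1) ≤ c) = Finset.range J := by
        ext j
        simp only [Finset.mem_filter, Finset.mem_range]
        constructor
        · rintro ⟨hjK, hjle⟩
          have := Nat.le_findGreatest (P := fun j => r j ≤ c) (show j+1 ≤ K by omega) hjle
          omega
        · intro hjJ
          exact ⟨by omega, le_trans (hmono (show j+1 ≤ J by omega)) hJspec⟩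
      have hSval : cntLT S lam = r J := by
        rw [hcntS lam, ← hc, if_pos (by omega), ← Finset.sum_filter, hfil,
          Finset.sum_range_tsub hmono J, hr0]
        have := hpos J
        omega
      rw [hSval]
      constructor
      · by_cases hJN : r J = N
        · have h1 : (c:ℝ) ≤ (r J : ℝ) := by exact_mod_cast (by omega : c ≤ r J)
          have h2 : (0:ℝ) ≤ (c:ℝ) := Nat.cast_nonneg _
          nlinarith
        · have hJK : J < K := by
            rcases lt_or_eq_of_le hJle with h | h
            · exact h
            · exact absurd (h ▸ hrK) hJN
          have hgt : ¬ (r (J+1) ≤ c) :=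
            Nat.findGreatest_is_greatest (P := fun j => r j ≤ c) (n := K) (k := J+1) (by omega) (by omega)
          have hcc : c + 1 ≤ r (J+1) := by omega
          have hcast : (c:ℝ) ≤ (r (J+1):ℝ) - 1 := by
            have : ((c+1 : ℕ):ℝ) ≤ (r (J+1):ℝ) := by exact_mod_cast hcc
            push_cast at this
            linarith
          have hstep := rseq_step (N := N) heps0 heps1 J
          have h1e : (0:ℝ) ≤ 1 - eps := by linarith
          calc (1-eps) * (c:ℝ) ≤ (1-eps) * ((r (J+1):ℝ) - 1) :=
                mul_le_mul_of_nonneg_left hcast h1e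
            _ ≤ (r J : ℝ) := hstep
      · exact_mod_cast hJspec
  · -- distinct elements
    have hsub : S.toFinset ⊆ insert (l.getD 0 0)
        ((Finset.range K).image (fun j => l.getD (r (j+1) - 1) 0)) := by
      intro a ha
      rw [Multiset.mem_toFinset, hSdef, Multiset.mem_add] at ha
      rcases ha with ha | ha
      · rw [Multiset.eq_of_mem_replicate ha]
        exact Finset.mem_insert_self _ _
      · rw [Multiset.mem_sum] at ha
        obtain ⟨j, hj, haj⟩ := ha
        exact Finset.mem_insert_of_mem
          (Finset.mem_image.mpr ⟨j, hj, (Multiset.eq_of_mem_replicate haj).symm⟩)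
    calc S.toFinset.card
        ≤ (insert (l.getD 0 0)
            ((Finset.range K).image (fun j => l.getD (r (j+1) - 1) 0))).card :=
          Finset.card_le_card hsub
      _ ≤ ((Finset.range K).image (fun j => l.getD (r (j+1) - 1) 0)).card + 1 :=
          Finset.card_insert_le _ _
      _ ≤ K + 1 := by
          have := Finset.card_image_le (s := Finset.range K)
            (f := fun j => l.getD (r (j+1) - 1) 0)
          simp only [Finset.card_range] at this
          omega
      _ ≤ ⌈(4:ℝ)/eps⌉₊ + ⌈4 * Real.log N / eps⌉₊ + 4 := by omega
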